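/- Let 1 < κ_* ≤ κ^* < ∞ and let A be a real symmetric d×d matrix with κ_*‖ξ‖² ≤ ξᵀAξ ≤ κ^*‖ξ‖² for all ξ ∈ ℝ^d, and set Q := (A − I)⁻¹. Then there exists a constant C > 0 such that for all ξ, η ∈ ℝ^d: ξᵀ(I + Q)ξ + 2ηᵀQξ + ηᵀQη ≥ C(‖ξ‖² + ‖η‖²). -/

import Mathlib

open Matrix

theorem stmt_8 {d : ℕ} (κs κt : ℝ) (hκs : 1 < κs) (hκst : κs ≤ κt)
    (A : Matrix (Fin d) (Fin d) ℝ) (hAsymm : A.IsSymm)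
    (hbound : ∀ ξ : Fin d → ℝ,
      κs * (ξ ⬝ᵥ ξ) ≤ ξ ⬝ᵥ (A *ᵥ ξ) ∧ ξ ⬝ᵥ (A *ᵥ ξ) ≤ κt * (ξ ⬝ᵥ ξ)) :
    ∃ C : ℝ, 0 < C ∧ ∀ ξ η : Fin d → ℝ,
      ξ ⬝ᵥ ((1 + (A - 1)⁻¹) *ᵥ ξ) + 2 * (η ⬝ᵥ ((A - 1)⁻¹ *ᵥ ξ)) +
          η ⬝ᵥ ((A - 1)⁻¹ *ᵥ η) ≥
        C * (ξ ⬝ᵥ ξ + η ⬝ᵥ η) := by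
  set B : Matrix (Fin d) (Fin d) ℝ := A - 1 with hBdef
  set Q : Matrix (Fin d) (Fin d) ℝ := B⁻¹ with hQdef
  have hκs1 : (0:ℝ) < κs - 1 := by linarith
  have hκt1 : (0:ℝ) < κt - 1 := by linarith
  have hself : ∀ x : Fin d → ℝ, 0 ≤ x ⬝ᵥ x :=
    fun x => Finset.sum_nonneg fun i _ => mul_self_nonneg _
  have hselfpos : ∀ x : Fin d → ℝ, x ≠ 0 → 0 < x ⬝ᵥ x := by
    intro x hx
    rcases lt_or_eq_of_le (hself x) with h | h
    · exact h
    · exfalso; apply hx; funext i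
      have := (Finset.sum_eq_zero_iff_of_nonneg
        (fun j (_ : j ∈ Finset.univ) => mul_self_nonneg (x j))).1 h.symm i (Finset.mem_univ i)
      exact mul_self_eq_zero.mp this
  have hBform : ∀ x : Fin d → ℝ, x ⬝ᵥ (B *ᵥ x) = x ⬝ᵥ (A *ᵥ x) - x ⬝ᵥ x := by
    intro x; simp [hBdef, sub_mulVec, one_mulVec, dotProduct_sub]
  have hBlow : ∀ x, (κs - 1) * (x ⬝ᵥ x) ≤ x ⬝ᵥ (B *ᵥ x) := by
    intro x; rw [hBform]; have := (hbound x).1; nlinarith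
  have hBhigh : ∀ x, x ⬝ᵥ (B *ᵥ x) ≤ (κt - 1) * (x ⬝ᵥ x) := by
    intro x; rw [hBform]; have := (hbound x).2; nlinarith
  have hBnonneg : ∀ x, 0 ≤ x ⬝ᵥ (B *ᵥ x) := fun x =>
    le_trans (mul_nonneg hκs1.le (hself x)) (hBlow x)
  have hBsymm : Bᵀ = B := by
    rw [hBdef, transpose_sub, transpose_one, hAsymm]
  have hBpd : B.PosDef := by
    refine Matrix.PosDef.of_dotProduct_mulVec_pos (by simpa [Matrix.IsHermitian] using hBsymm) fun x hx => ?_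
    have h1 := hBlow x
    have h2 := hselfpos x hx
    simp only [star_trivial]
    nlinarith
  have hdet : IsUnit B.det := (isUnit_iff_isUnit_det _).1 hBpd.isUnit
  have hBQ : B * Q = 1 := Matrix.mul_nonsing_inv B hdet
  have hQsymm : Qᵀ = Q := by rw [hQdef, transpose_nonsing_inv, hBsymm]
  have hdotsymm : ∀ (M : Matrix (Fin d) (Fin d) ℝ), Mᵀ = M →
      ∀ x y : Fin d → ℝ, x ⬝ᵥ (M *ᵥ y) = y ⬝ᵥ (M *ᵥ x) := by
    intro M hM x y
    rw [dotProduct_mulVec, ← mulVec_transpose, hM, dotProduct_comm]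
  have hBQx : ∀ x : Fin d → ℝ, B *ᵥ (Q *ᵥ x) = x := by
    intro x; rw [mulVec_mulVec, hBQ, one_mulVec]
  -- lower bound for the quadratic form of Q
  have hQlow : ∀ x : Fin d → ℝ, (1 / (κt - 1)) * (x ⬝ᵥ x) ≤ x ⬝ᵥ (Q *ᵥ x) := by
    intro x
    by_cases hx : x = 0
    · simp [hx]
    set b := x ⬝ᵥ x with hb
    set c := x ⬝ᵥ (B *ᵥ x) with hc
    set a := x ⬝ᵥ (Q *ᵥ x) with ha
    have hbpos : 0 < b := hselfpos x hx
    have hcpos : 0 < c := lt_of_lt_of_le (mul_pos hκs1 hbpos) (hBlow x)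
    have hchigh : c ≤ (κt - 1) * b := hBhigh x
    set v : Fin d → ℝ := b • x + (-c) • (Q *ᵥ x) with hv
    have hcross : (Q *ᵥ x) ⬝ᵥ (B *ᵥ x) = b := by
      rw [hdotsymm B hBsymm, hBQx]
    have hcross2 : (Q *ᵥ x) ⬝ᵥ x = a := dotProduct_comm _ _
    have hexp : v ⬝ᵥ (B *ᵥ v) = c ^ 2 * a - b ^ 2 * c := by
      simp only [hv, mulVec_add, mulVec_smul, hBQx, dotProduct_add, add_dotProduct,
        smul_dotProduct, dotProduct_smul, smul_eq_mul, hcross, hcross2]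
      rw [← hb, ← hc]; ring
    have key : 0 ≤ c ^ 2 * a - b ^ 2 * c := hexp ▸ hBnonneg v
    rw [div_mul_eq_mul_div, div_le_iff₀ hκt1, one_mul]
    nlinarith [mul_pos hcpos hbpos, mul_pos hcpos hcpos]
  -- choose the constant
  set c0 : ℝ := min (1 / (κt - 1)) (1 / 2) with hc0
  have hc0pos : 0 < c0 := lt_min (by positivity) (by norm_num)
  have hc0half : c0 ≤ 1 / 2 := min_le_right _ _
  refine ⟨c0 / 2, by positivity, fun ξ η => ?_⟩
  set w : Fin d → ℝ := ξ + η with hw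
  have hmain : ξ ⬝ᵥ ((1 + Q) *ᵥ ξ) + 2 * (η ⬝ᵥ (Q *ᵥ ξ)) + η ⬝ᵥ (Q *ᵥ η)
      = ξ ⬝ᵥ ξ + w ⬝ᵥ (Q *ᵥ w) := by
    have hsw : ξ ⬝ᵥ (Q *ᵥ η) = η ⬝ᵥ (Q *ᵥ ξ) := hdotsymm Q hQsymm ξ η
    simp only [hw, add_mulVec, one_mulVec, mulVec_add, dotProduct_add, add_dotProduct]
    rw [hsw]; ring
  have hq : c0 * (w ⬝ᵥ w) ≤ w ⬝ᵥ (Q *ᵥ w) :=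
    le_trans (mul_le_mul_of_nonneg_right (min_le_left _ _) (hself w)) (hQlow w)
  have hwexp : w ⬝ᵥ w = ξ ⬝ᵥ ξ + 2 * (ξ ⬝ᵥ η) + η ⬝ᵥ η := by
    simp only [hw, dotProduct_add, add_dotProduct]
    rw [dotProduct_comm η ξ]; ring
  have haux : 0 ≤ ((2:ℝ) • ξ + η) ⬝ᵥ ((2:ℝ) • ξ + η) := hself _
  have haux2 : ((2:ℝ) • ξ + η) ⬝ᵥ ((2:ℝ) • ξ + η)
      = 4 * (ξ ⬝ᵥ ξ) + 4 * (ξ ⬝ᵥ η) + η ⬝ᵥ η := by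
    simp only [dotProduct_add, add_dotProduct, smul_dotProduct, dotProduct_smul,
      smul_eq_mul]
    rw [dotProduct_comm η ξ]; ring
  rw [ge_iff_le, hmain]
  nlinarith [hself ξ, hself η, hq, hself w]
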